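/- Let n be an even positive integer. Then there is no polynomial P with real coefficients such that for every t ∈ [−1, 1], the Lebesgue volume of the set {x ∈ ℝⁿ : ‖x‖ ≤ 1 and x₁ ≥ t} equals P(t). (This is a special case of the fact that the volume function cut by hyperplanes from a compact domain with C^∞-smooth boundary in ℝ^{2k} is never algebraic.) -/

import Mathlib

open MeasureTheory

open scoped ENNReal

namespace BallCapAux

noncomputable def g (m : ℕ) (κ : ℝ) (s : ℝ) : ℝ := Real.sqrt (1 - s ^ 2) ^ m * κ

lemma g_cont (m : ℕ) (κ : ℝ) : Continuous (g m κ) := by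
  unfold g
  exact (((continuous_const.sub (continuous_pow 2)).sqrt).pow m).mul continuous_const

lemma g_zero_of (m : ℕ) (hm : 1 ≤ m) (κ : ℝ) {s : ℝ} (hs : 1 < |s|) : g m κ s = 0 := by
  have h1 : 1 - s ^ 2 < 0 := by nlinarith [sq_abs s, abs_nonneg s]
  have : Real.sqrt (1 - s ^ 2) = 0 := Real.sqrt_eq_zero_of_nonpos h1.le
  simp [g, this, zero_pow (by omega : m ≠ 0)]

lemma g_compactSupport (m : ℕ) (hm : 1 ≤ m) (κ : ℝ) : HasCompactSupport (g m κ) := by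
  apply HasCompactSupport.intro (isCompact_Icc (a := (-1 : ℝ)) (b := 1))
  intro s hs
  apply g_zero_of m hm κ
  simp only [Set.mem_Icc, not_and_or, not_le] at hs
  rcases hs with h | h
  · rw [abs_of_nonpos (by linarith)]; linarith
  · rw [abs_of_pos (by linarith)]; linarith

lemma g_integrable (m : ℕ) (hm : 1 ≤ m) (κ : ℝ) : Integrable (g m κ) :=
  (g_cont m κ).integrable_of_hasCompactSupport (g_compactSupport m hm κ)

lemma g_nonneg (m : ℕ) {κ : ℝ} (hκ : 0 ≤ κ) (s : ℝ) : 0 ≤ g m κ s :=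
  mul_nonneg (pow_nonneg (Real.sqrt_nonneg _) _) hκ

end BallCapAux

/-- For even positive `n`, the volume of the cap cut from the unit ball in `ℝⁿ`
by the hyperplane `x₁ = t` is not a polynomial function of `t` on `[-1, 1]`. -/
theorem ball_cap_volume_not_polynomial_of_even_dim (n : ℕ) (hpos : 0 < n) (heven : Even n) :
    ¬ ∃ P : Polynomial ℝ, ∀ t ∈ Set.Icc (-1 : ℝ) 1,
      (volume {x : EuclideanSpace ℝ (Fin n) | ‖x‖ ≤ 1 ∧ t ≤ x ⟨0, hpos⟩}).toReal =
        P.eval t := by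
  rintro ⟨P, hP⟩
  obtain ⟨m, rfl⟩ : ∃ m, n = m + 1 := ⟨n - 1, (Nat.succ_pred_eq_of_pos hpos).symm⟩
  have hmodd : Odd m := by
    have h : Odd (m + 1 - 1) := Nat.Even.sub_odd (by omega) heven odd_one
    simpa using h
  have hm1 : 1 ≤ m := hmodd.pos
  set B : ℝ≥0∞ := volume (Metric.ball (0 : EuclideanSpace ℝ (Fin m)) 1) with hB
  have hBpos : 0 < B := Metric.measure_ball_pos volume 0 one_pos
  have hBlt : B < ⊤ := measure_ball_lt_top
  set κ : ℝ := B.toReal with hκdef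
  have hκpos : 0 < κ := ENNReal.toReal_pos hBpos.ne' hBlt.ne
  -- volume of the sublevel sets of the sum of squares in `Fin m → ℝ`
  have hslice : ∀ c : ℝ, volume {y : Fin m → ℝ | ∑ j, (y j) ^ 2 ≤ c}
      = ENNReal.ofReal (Real.sqrt c ^ m) * B := by
    intro c
    rcases lt_or_ge c 0 with hc | hc
    · have h1 : {y : Fin m → ℝ | ∑ j, (y j) ^ 2 ≤ c} = ∅ := by
        ext y
        simp only [Set.mem_setOf_eq, Set.mem_empty_iff_false, iff_false, not_le]
        exact hc.trans_le (Finset.sum_nonneg fun j _ => sq_nonneg _)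
      rw [h1, Real.sqrt_eq_zero_of_nonpos hc.le, zero_pow (by omega : m ≠ 0)]
      simp
    · have hset : MeasurableSet {y : Fin m → ℝ | ∑ j, (y j) ^ 2 ≤ c} :=
        measurableSet_le (Finset.measurable_sum _ fun j _ => (measurable_pi_apply j).pow_const 2)
          measurable_const
      have h1 : (MeasurableEquiv.toLp 2 (Fin m → ℝ)).symm ⁻¹' {y : Fin m → ℝ | ∑ j, (y j) ^ 2 ≤ c}
          = Metric.closedBall (0 : EuclideanSpace ℝ (Fin m)) (Real.sqrt c) := by
        ext x
        simp only [Set.mem_preimage, Metric.mem_closedBall, dist_zero_right, Set.mem_setOf_eq]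
        have hy : ∀ j, ((MeasurableEquiv.toLp 2 (Fin m → ℝ)).symm x) j = x j := fun j => rfl
        simp_rw [hy]
        rw [EuclideanSpace.norm_eq]
        simp_rw [Real.norm_eq_abs, sq_abs]
        rw [show Real.sqrt c = Real.sqrt c from rfl, ← Real.sqrt_le_sqrt_iff hc]
      rw [← (EuclideanSpace.volume_preserving_symm_measurableEquiv_toLp (Fin m)).measure_preimage
        hset.nullMeasurableSet, h1,
        Measure.addHaar_closedBall _ _ (Real.sqrt_nonneg c), finrank_euclideanSpace_fin]
  -- the key volume identity
  have key : ∀ t : ℝ,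
      volume {x : EuclideanSpace ℝ (Fin (m + 1)) | ‖x‖ ≤ 1 ∧ t ≤ x ⟨0, hpos⟩}
        = ∫⁻ s in Set.Ici t, ENNReal.ofReal (BallCapAux.g m κ s) := by
    intro t
    set U : Set (ℝ × (Fin m → ℝ)) :=
      {p | p.1 ^ 2 + ∑ j, (p.2 j) ^ 2 ≤ 1 ∧ t ≤ p.1} with hU
    have hUm : MeasurableSet U := by
      have hmeas : Measurable (fun p : ℝ × (Fin m → ℝ) => p.1 ^ 2 + ∑ j, (p.2 j) ^ 2) := by
        apply Measurable.add
        · exact measurable_fst.pow_const 2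
        · exact Finset.measurable_sum _
            fun j _ => ((measurable_pi_apply j).comp measurable_snd).pow_const 2
      have hA : MeasurableSet {p : ℝ × (Fin m → ℝ) | p.1 ^ 2 + ∑ j, (p.2 j) ^ 2 ≤ 1} :=
        measurableSet_le hmeas measurable_const
      have hBm : MeasurableSet {p : ℝ × (Fin m → ℝ) | t ≤ p.1} :=
        measurableSet_le measurable_const measurable_fst
      exact hA.inter hBm
    have hS : {x : EuclideanSpace ℝ (Fin (m + 1)) | ‖x‖ ≤ 1 ∧ t ≤ x ⟨0, hpos⟩}
        = (⇑(MeasurableEquiv.piFinSuccAbove (fun _ => ℝ) 0)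
            ∘ ⇑(MeasurableEquiv.toLp 2 (Fin (m + 1) → ℝ)).symm) ⁻¹' U := by
      ext x
      simp only [Set.mem_setOf_eq, Set.mem_preimage, hU, Function.comp_apply,
        MeasurableEquiv.piFinSuccAbove_apply]
      have hxnorm : ‖x‖ ≤ 1 ↔ ∑ i, (x i) ^ 2 ≤ 1 := by
        rw [EuclideanSpace.norm_eq]
        simp_rw [Real.norm_eq_abs, sq_abs]
        have h := Real.sqrt_le_sqrt_iff (x := ∑ i, (x i) ^ 2) (zero_le_one)
        rwa [Real.sqrt_one] at h
      have hsum : ∑ i, (x i) ^ 2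
          = (x 0) ^ 2 + ∑ j, (x (Fin.succAbove 0 j)) ^ 2 :=
        Fin.sum_univ_succAbove (fun i => (x i) ^ 2) 0
      have h0 : (⟨0, hpos⟩ : Fin (m + 1)) = 0 := rfl
      rw [hxnorm, hsum, h0]
      rfl
    rw [hS,
      ((volume_preserving_piFinSuccAbove (fun _ : Fin (m + 1) => ℝ) 0).comp
        (EuclideanSpace.volume_preserving_symm_measurableEquiv_toLp (Fin (m + 1)))).measure_preimage
        hUm.nullMeasurableSet,
      Measure.volume_eq_prod, Measure.prod_apply hUm]
    have hsec : ∀ s : ℝ, volume (Prod.mk s ⁻¹' U)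
        = Set.indicator (Set.Ici t) (fun s => ENNReal.ofReal (BallCapAux.g m κ s)) s := by
      intro s
      rcases le_or_gt t s with hts | hts
      · have h1 : Prod.mk s ⁻¹' U = {y : Fin m → ℝ | ∑ j, (y j) ^ 2 ≤ 1 - s ^ 2} := by
          ext y
          simp only [Set.mem_preimage, hU, Set.mem_setOf_eq]
          constructor
          · intro h; linarith [h.1]
          · intro h; exact ⟨by linarith, hts⟩
        rw [h1, hslice, Set.indicator_of_mem (Set.mem_Ici.mpr hts)]
        unfold BallCapAux.g
        rw [ENNReal.ofReal_mul (pow_nonneg (Real.sqrt_nonneg _) _), hκdef,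
          ENNReal.ofReal_toReal hBlt.ne]
      · have h1 : Prod.mk s ⁻¹' U = ∅ := by
          ext y
          simp only [Set.mem_preimage, hU, Set.mem_setOf_eq, Set.mem_empty_iff_false, iff_false,
            not_and]
          intro _; linarith
        rw [h1, Set.indicator_of_notMem (by simpa using hts)]
        simp
    simp_rw [hsec]
    rw [lintegral_indicator measurableSet_Ici]
  -- convert to a real integral
  have hginteg := BallCapAux.g_integrable m hm1 κ
  have hgnn := BallCapAux.g_nonneg m hκpos.le
  have keyR : ∀ t ∈ Set.Icc (-1 : ℝ) 1,
      P.eval t = ∫ s in t..1, BallCapAux.g m κ s := by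
    intro t ht
    have h1 := hP t ht
    rw [key t] at h1
    rw [← h1]
    have h2 : ∫⁻ s in Set.Ici t, ENNReal.ofReal (BallCapAux.g m κ s)
        = ENNReal.ofReal (∫ s in Set.Ici t, BallCapAux.g m κ s) := by
      rw [← ofReal_integral_eq_lintegral_ofReal (hginteg.restrict)
        (Filter.Eventually.of_forall hgnn)]
    rw [h2, ENNReal.toReal_ofReal (integral_nonneg hgnn)]
    -- split the integral
    have hsplit : Set.Ioi t = Set.Ioc t 1 ∪ Set.Ioi 1 := (Set.Ioc_union_Ioi_eq_Ioi ht.2).symm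
    rw [integral_Ici_eq_integral_Ioi, hsplit,
      setIntegral_union (Set.Ioc_disjoint_Ioi le_rfl) measurableSet_Ioi
        (hginteg.restrict) (hginteg.restrict)]
    have hzero : ∫ s in Set.Ioi (1 : ℝ), BallCapAux.g m κ s = 0 := by
      apply setIntegral_eq_zero_of_forall_eq_zero
      intro s hs
      have hs1 : (1 : ℝ) < s := Set.mem_Ioi.mp hs
      have habs : 1 < |s| := by rw [abs_of_pos (by linarith)]; exact hs1
      exact BallCapAux.g_zero_of m hm1 κ habs
    rw [hzero, add_zero, intervalIntegral.integral_of_le ht.2]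
  -- differentiate
  have hderiv : ∀ t ∈ Set.Ioo (-1 : ℝ) 1,
      P.derivative.eval t = -(BallCapAux.g m κ t) := by
    intro t ht
    have hG : HasDerivAt (fun u => ∫ s in u..1, BallCapAux.g m κ s)
        (-(BallCapAux.g m κ t)) t := by
      exact intervalIntegral.integral_hasDerivAt_left
        (hginteg.intervalIntegrable)
        ((BallCapAux.g_cont m κ).stronglyMeasurable.stronglyMeasurableAtFilter)
        (BallCapAux.g_cont m κ).continuousAt
    have hEv : (fun u => P.eval u) =ᶠ[nhds t] fun u => ∫ s in u..1, BallCapAux.g m κ s := by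
      filter_upwards [Ioo_mem_nhds ht.1 ht.2] with u hu
      exact keyR u ⟨hu.1.le, hu.2.le⟩
    have hP' : HasDerivAt (fun u => P.eval u) (-(BallCapAux.g m κ t)) t :=
      hG.congr_of_eventuallyEq hEv
    exact (P.hasDerivAt t).unique hP'
  -- polynomial identity for the square of the derivative
  set D := P.derivative with hD
  have hsq : D ^ 2 = Polynomial.C (κ ^ 2) * (1 - Polynomial.X ^ 2) ^ m := by
    apply Polynomial.eq_of_infinite_eval_eq
    have hinf : (Set.Ioo (-1 : ℝ) 1).Infinite := Set.Ioo_infinite (by norm_num)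
    apply Set.Infinite.mono _ hinf
    intro t ht
    have h1 := hderiv t ht
    have h2 : (0 : ℝ) ≤ 1 - t ^ 2 := by nlinarith [ht.1, ht.2]
    simp only [Set.mem_setOf_eq, Polynomial.eval_pow, Polynomial.eval_mul, Polynomial.eval_C,
      Polynomial.eval_sub, Polynomial.eval_one, Polynomial.eval_X, h1]
    unfold BallCapAux.g
    rw [neg_pow, mul_pow, ← pow_mul, mul_comm m 2, pow_mul, Real.sq_sqrt h2]
    ring
  -- D is nonzero
  have hD0 : D ≠ 0 := by
    intro h
    have h1 := hderiv 0 (by constructor <;> norm_num)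
    rw [h, Polynomial.eval_zero] at h1
    unfold BallCapAux.g at h1
    rw [show (1 : ℝ) - 0 ^ 2 = 1 by norm_num, Real.sqrt_one, one_pow, one_mul] at h1
    linarith
  -- root multiplicity at 1
  have hDD : D * D ≠ 0 := mul_ne_zero hD0 hD0
  have hleft : (D ^ 2).rootMultiplicity 1 = 2 * D.rootMultiplicity 1 := by
    rw [sq, Polynomial.rootMultiplicity_mul hDD, two_mul]
  have hfac : Polynomial.C (κ ^ 2) * (1 - Polynomial.X ^ 2 : Polynomial ℝ) ^ m
      = (Polynomial.C (κ ^ 2) * ((-1) ^ m * (Polynomial.X + 1) ^ m))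
        * (Polynomial.X - Polynomial.C 1) ^ m := by
    have hbase : (1 - Polynomial.X ^ 2 : Polynomial ℝ)
        = (-1) * ((Polynomial.X + 1) * (Polynomial.X - Polynomial.C 1)) := by
      rw [Polynomial.C_1]; ring
    rw [hbase, mul_pow, mul_pow]; ring
  have hq0 : (Polynomial.C (κ ^ 2) * ((-1 : Polynomial ℝ) ^ m * (Polynomial.X + 1) ^ m)) ≠ 0 := by
    intro h
    have h1 := congrArg (Polynomial.eval (1 : ℝ)) h
    simp only [Polynomial.eval_mul, Polynomial.eval_pow, Polynomial.eval_C, Polynomial.eval_neg,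
      Polynomial.eval_one, Polynomial.eval_add, Polynomial.eval_X, Polynomial.eval_zero] at h1
    have h2 : ((1 : ℝ) + 1) ^ m ≠ 0 := by positivity
    have h3 : ((-1 : ℝ)) ^ m ≠ 0 := pow_ne_zero _ (by norm_num)
    exact (mul_ne_zero (pow_ne_zero 2 hκpos.ne') (mul_ne_zero h3 h2)) h1
  have hright : (Polynomial.C (κ ^ 2) * (1 - Polynomial.X ^ 2 : Polynomial ℝ) ^ m).rootMultiplicity 1
      = m := by
    rw [hfac, Polynomial.rootMultiplicity_mul_X_sub_C_pow hq0]
    have : (Polynomial.C (κ ^ 2) * ((-1 : Polynomial ℝ) ^ m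
        * (Polynomial.X + 1) ^ m)).rootMultiplicity 1 = 0 := by
      apply Polynomial.rootMultiplicity_eq_zero
      intro h
      simp only [Polynomial.IsRoot, Polynomial.eval_mul, Polynomial.eval_pow, Polynomial.eval_C,
        Polynomial.eval_neg, Polynomial.eval_one, Polynomial.eval_add, Polynomial.eval_X] at h
      have h2 : ((1 : ℝ) + 1) ^ m ≠ 0 := by positivity
      have h3 : ((-1 : ℝ)) ^ m ≠ 0 := pow_ne_zero _ (by norm_num)
      exact (mul_ne_zero (pow_ne_zero 2 hκpos.ne') (mul_ne_zero h3 h2)) h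
    omega
  rw [hsq, hright] at hleft
  obtain ⟨j, hj⟩ := hmodd
  omega
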